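/- Let X be a Banach space and let (Qᵢ)_{i ∈ I} be a family of mutually orthogonal, non-zero, bounded idempotent operators on X with sup_i ‖Qᵢ‖ < ∞. Then the density character of X is at least the cardinality of I. -/
import Mathlib


universe u v

/-- If a Banach space `X` admits a uniformly bounded family of mutually orthogonal
non-zero idempotent operators indexed by `I`, then every dense subset of `X` has
cardinality at least `|I|` (i.e. the density character of `X` is at least `|I|`). -/
theorem density_ge_card_of_orthogonal_idempotents
    {X : Type u} [NormedAddCommGroup X] [NormedSpace ℂ X] [CompleteSpace X]
    {I : Type v} (Q : I → X →L[ℂ] X)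
    (hidem : ∀ i, IsIdempotentElem (Q i))
    (hne : ∀ i, Q i ≠ 0)
    (horth : ∀ i j, i ≠ j → Q i ∘L Q j = 0)
    (hbdd : ∃ C : ℝ, ∀ i, ‖Q i‖ ≤ C) :
    ∀ s : Set X, Dense s →
      Cardinal.lift.{u} (Cardinal.mk I) ≤ Cardinal.lift.{v} (Cardinal.mk s) := by
  intro s hs
  rcases isEmpty_or_nonempty I with hI | hI
  · simp
  obtain ⟨C, hC⟩ := hbdd
  have hC1 : (1:ℝ) ≤ C := by
    obtain ⟨i⟩ := hI
    refine le_trans ?_ (hC i)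
    have hpos : 0 < ‖Q i‖ := norm_pos_iff.mpr (hne i)
    have h2 : ‖Q i‖ ≤ ‖Q i‖ * ‖Q i‖ := by
      calc ‖Q i‖ = ‖Q i * Q i‖ := by rw [hidem i]
        _ ≤ ‖Q i‖ * ‖Q i‖ := norm_mul_le _ _
    nlinarith
  have hCpos : (0:ℝ) < C := lt_of_lt_of_le one_pos hC1
  have hx : ∀ i, ∃ x : X, Q i x ≠ 0 := by
    intro i
    by_contra h
    push_neg at h
    exact hne i (ContinuousLinearMap.ext fun x => h x)
  choose x hxne using hx
  set y : I → X := fun i => ‖Q i (x i)‖⁻¹ • Q i (x i) with hy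
  have hynorm : ∀ i, ‖y i‖ = 1 := by
    intro i
    simp [hy, norm_smul, inv_mul_cancel₀ (norm_ne_zero_iff.mpr (hxne i))]
  have hQy : ∀ i, Q i (y i) = y i := by
    intro i
    have h := DFunLike.congr_fun (hidem i) (x i)
    simp only [ContinuousLinearMap.mul_apply] at h
    simp [hy, h]
  have hQy0 : ∀ i j, i ≠ j → Q i (y j) = 0 := by
    intro i j hij
    have h := DFunLike.congr_fun (horth i j hij) (x j)
    simp only [ContinuousLinearMap.coe_comp', Function.comp_apply,
      ContinuousLinearMap.zero_apply] at h
    simp [hy, h]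
  have hsep : ∀ i j, i ≠ j → 1 ≤ C * ‖y i - y j‖ := by
    intro i j hij
    have h1 : Q i (y i - y j) = y i := by
      rw [map_sub, hQy i, hQy0 i j hij, sub_zero]
    calc (1:ℝ) = ‖y i‖ := (hynorm i).symm
      _ = ‖Q i (y i - y j)‖ := by rw [h1]
      _ ≤ ‖Q i‖ * ‖y i - y j‖ := (Q i).le_opNorm _
      _ ≤ C * ‖y i - y j‖ := by
          exact mul_le_mul_of_nonneg_right (hC i) (norm_nonneg _)
  have hchoose : ∀ i : I, ∃ z ∈ s, dist (y i) z < 1 / (2 * C) := by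
    intro i
    exact hs.exists_dist_lt (y i) (by positivity)
  choose f hfs hfd using hchoose
  have hfinj : Function.Injective f := by
    intro i j hij
    by_contra hne'
    have h1 := hsep i j hne'
    have h2 : dist (y i) (y j) ≤ dist (y i) (f i) + dist (f j) (y j) := by
      rw [hij]; exact dist_triangle _ _ _
    have h3 : dist (f j) (y j) < 1 / (2 * C) := by
      rw [dist_comm]; exact hfd j
    have h4 : dist (y i) (y j) = ‖y i - y j‖ := dist_eq_norm _ _
    have h5 : dist (y i) (y j) < 1 / C := by
      have := hfd i
      calc dist (y i) (y j) ≤ dist (y i) (f i) + dist (f j) (y j) := h2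
        _ < 1 / (2 * C) + 1 / (2 * C) := by linarith
        _ = 1 / C := by field_simp [hCpos.ne']; ring
    rw [h4] at h5
    have : C * ‖y i - y j‖ < 1 := by
      rw [lt_div_iff₀ hCpos] at h5
      linarith [h5]
    linarith
  rw [Cardinal.lift_mk_le']
  exact ⟨⟨fun i => ⟨f i, hfs i⟩, fun i j h => hfinj (by simpa using congrArg Subtype.val h)⟩⟩
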